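/- Let S be a finite subset of Z^2, K(x,y;t) = 1 - t sum_{(i,j) in S} x^i y^j, and S(x,y;t) the generating function for walks on the slit plane with steps in S. Let Omega(x^{-1};t) in Q[x^{-1}][[t]] be the generating function for bridges, i.e. the coefficient of t^n x^{i} is the number of bridges of length n ending at (i,0) (so i <= 0), and let Omega_0(t) be the generating function for bridges ending at (0,0). Then Omega(x^{-1};0) = 0, and in Q[x,x^{-1},y,y^{-1}][[t]]: K(x,y;t) * S(x,y;t) = 1 - Omega(x^{-1};t); moreover the generating function L(t) for loops satisfies L(t) * (1 - Omega_0(t)) = 1. -/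

import Mathlib

open scoped Classical
open PowerSeries

namespace SlitPlane

/-- A point (or step) of the lattice `ℤ²`. -/
abbrev Pt := ℤ × ℤ

/-- All steps of the walk `l` belong to `S`.  A walk is identified with its
list of steps; it starts at the origin. -/
def StepsIn (S : Finset Pt) (l : List Pt) : Prop := ∀ s ∈ l, s ∈ S

/-- The vertex `w_i` of the walk reached after `i` steps. -/
def vert (l : List Pt) (i : ℕ) : Pt := (l.take i).sum

/-- Membership in the half-line `H = {(k,0) : k ≤ 0}`. -/
def OnH (p : Pt) : Prop := p.2 = 0 ∧ p.1 ≤ 0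

/-- Membership in the half-line `{(k,0) : k < 0}`. -/
def OnNegAxis (p : Pt) : Prop := p.2 = 0 ∧ p.1 < 0

/-- A walk on the slit plane: none of the vertices `w_1, ..., w_n` lies on `H`. -/
def AvoidsH (l : List Pt) : Prop := ∀ i, 1 ≤ i → i ≤ l.length → ¬ OnH (vert l i)

/-- Number of walks of length `n` on the slit plane, with steps in `S`, ending at `e`. -/
noncomputable def slitCount (S : Finset Pt) (n : ℕ) (e : Pt) : ℕ :=
  Set.ncard {l : List Pt | l.length = n ∧ StepsIn S l ∧ AvoidsH l ∧ l.sum = e}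

/-- Number of (unconstrained) walks of length `n` with steps in `S` ending at `e`. -/
noncomputable def walkCount (S : Finset Pt) (n : ℕ) (e : Pt) : ℕ :=
  Set.ncard {l : List Pt | l.length = n ∧ StepsIn S l ∧ l.sum = e}

/-- Number of loops of length `n` with steps in `S`: walks ending at the origin,
none of whose vertices lies on `{(k,0) : k < 0}`. -/
noncomputable def loopCount (S : Finset Pt) (n : ℕ) : ℕ :=
  Set.ncard {l : List Pt | l.length = n ∧ StepsIn S l ∧
    (∀ i ≤ l.length, ¬ OnNegAxis (vert l i)) ∧ l.sum = (0, 0)}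

end SlitPlane

namespace SlitPlane

/-- The Laurent polynomial ring `ℚ[x, x⁻¹]`. -/
abbrev L1 := AddMonoidAlgebra ℚ ℤ

/-- The Laurent polynomial ring `ℚ[x, x⁻¹, y, y⁻¹]`: monomial `(i,j)` is `x^i y^j`. -/
abbrev L2 := AddMonoidAlgebra ℚ (ℤ × ℤ)

/-- The embedding `ℚ[x,x⁻¹] → ℚ[x,x⁻¹,y,y⁻¹]`. -/
noncomputable def iotaX : L1 →+* L2 :=
  AddMonoidAlgebra.mapDomainRingHom ℚ (AddMonoidHom.inl ℤ ℤ)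

/-- The polynomial `K(x,y;t) = 1 - t ∑_{(i,j) ∈ S} x^i y^j`, as a power series in `t`. -/
noncomputable def Kpoly (S : Finset Pt) : PowerSeries L2 :=
  1 - PowerSeries.X * PowerSeries.C (∑ s ∈ S, AddMonoidAlgebra.single s (1 : ℚ))

/-- Number of bridges of length `n` ending at `(i,0)`: nonempty walks whose endpoint
lies on `H` and none of whose vertices `w_1, ..., w_{n-1}` lies on `H`. -/
noncomputable def bridgeCount (S : Finset Pt) (n : ℕ) (i : ℤ) : ℕ :=
  Set.ncard {l : List Pt | l.length = n ∧ l ≠ [] ∧ StepsIn S l ∧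
    (∀ k, 1 ≤ k → k < l.length → ¬ OnH (vert l k)) ∧
    OnH l.sum ∧ l.sum = (i, 0)}

-- vert lemmas
lemma vert_zero (l : List Pt) : vert l 0 = 0 := rfl

lemma vert_length (l : List Pt) : vert l l.length = l.sum := by
  simp [vert]

lemma vert_take (l : List Pt) {k j : ℕ} (h : j ≤ k) : vert (l.take k) j = vert l j := by
  simp [vert, List.take_take, Nat.min_eq_left h]

lemma vert_append_left (l m : List Pt) {j : ℕ} (h : j ≤ l.length) :
    vert (l ++ m) j = vert l j := by
  simp [vert, List.take_append_of_le_length h]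

lemma vert_drop (l : List Pt) (k i : ℕ) :
    vert (l.drop k) i = vert l (k + i) - vert l k := by
  have : l.take (k + i) = l.take k ++ (l.drop k).take i := List.take_add
  simp [vert, this]

lemma vert_append_sing (l : List Pt) (s : Pt) :
    vert (l ++ [s]) (l.length + 1) = l.sum + s := by
  have h : (l ++ [s]).length = l.length + 1 := by simp
  rw [← h, vert_length]; simp

-- Finiteness
lemma finite_walks (S : Finset Pt) (n : ℕ) :
    {l : List Pt | l.length = n ∧ StepsIn S l}.Finite := by
  induction n with
  | zero =>
    apply Set.Finite.subset (Set.finite_singleton ([] : List Pt))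
    rintro l ⟨hl, -⟩
    simp [List.length_eq_zero_iff.mp hl]
  | succ n ih =>
    apply Set.Finite.subset (((S.finite_toSet).prod ih).image
      (fun p : Pt × List Pt => p.1 :: p.2))
    rintro l ⟨hl, hst⟩
    match l with
    | [] => simp at hl
    | a :: t =>
      exact ⟨(a, t), ⟨hst a (by simp), by simpa using hl,
        fun s hs => hst s (by simp [hs])⟩, rfl⟩

-- ncard helpers
lemma ncard_biUnion {α β : Type*} (t : Finset α) (f : α → Set β)
    (hf : ∀ a ∈ t, (f a).Finite)
    (hd : ∀ a ∈ t, ∀ b ∈ t, a ≠ b → Disjoint (f a) (f b)) :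
    (⋃ a ∈ t, f a).ncard = ∑ a ∈ t, (f a).ncard := by
  classical
  induction t using Finset.induction with
  | empty => simp
  | @insert a t ha ih =>
    rw [Finset.sum_insert ha]
    have hu : (⋃ b ∈ insert a t, f b) = f a ∪ ⋃ b ∈ t, f b := by
      simp [Set.iUnion_or, Set.iUnion_union_distrib]
    have hfin2 : (⋃ b ∈ t, f b).Finite :=
      Set.Finite.biUnion t.finite_toSet (fun b hb => hf b (Finset.mem_insert_of_mem hb))
    have hdisj : Disjoint (f a) (⋃ b ∈ t, f b) := by
      refine Set.disjoint_iUnion_right.mpr (fun b => Set.disjoint_iUnion_right.mpr (fun hb => ?_))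
      exact hd a (Finset.mem_insert_self a t) b (Finset.mem_insert_of_mem hb)
        (fun h => ha (h ▸ hb))
    rw [hu, Set.ncard_union_eq hdisj (hf a (Finset.mem_insert_self a t)) hfin2,
      ih (fun b hb => hf b (Finset.mem_insert_of_mem hb))
        (fun b hb c hc h => hd b (Finset.mem_insert_of_mem hb) c (Finset.mem_insert_of_mem hc) h)]

lemma ncard_prod {α β : Type*} (s : Set α) (t : Set β) :
    (s ×ˢ t).ncard = s.ncard * t.ncard := by
  calc (s ×ˢ t).ncard = Nat.card (s ×ˢ t : Set _) := (Nat.card_coe_set_eq _).symm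
    _ = Nat.card (↥s × ↥t) := Nat.card_congr (Equiv.Set.prod s t)
    _ = Nat.card s * Nat.card t := Nat.card_prod _ _
    _ = s.ncard * t.ncard := by rw [Nat.card_coe_set_eq, Nat.card_coe_set_eq]

def slitSet (S : Finset Pt) (n : ℕ) (e : Pt) : Set (List Pt) :=
  {l | l.length = n ∧ StepsIn S l ∧ AvoidsH l ∧ l.sum = e}

def bridgeSet (S : Finset Pt) (n : ℕ) (e : Pt) : Set (List Pt) :=
  {l | l.length = n ∧ l ≠ [] ∧ StepsIn S l ∧
    (∀ k, 1 ≤ k → k < l.length → ¬ OnH (vert l k)) ∧ OnH l.sum ∧ l.sum = e}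

lemma slitCount_eq (S : Finset Pt) (n : ℕ) (e : Pt) :
    slitCount S n e = (slitSet S n e).ncard := rfl

lemma slitSet_finite (S : Finset Pt) (n : ℕ) (e : Pt) : (slitSet S n e).Finite :=
  (finite_walks S n).subset (fun l hl => ⟨hl.1, hl.2.1⟩)

lemma bridgeSet_finite (S : Finset Pt) (n : ℕ) (e : Pt) : (bridgeSet S n e).Finite :=
  (finite_walks S n).subset (fun l hl => ⟨hl.1, hl.2.2.1⟩)

/-- The set of length-(n+1) walks with steps in S, whose vertices 1..n avoid H,
ending at e. -/
def preSet (S : Finset Pt) (n : ℕ) (e : Pt) : Set (List Pt) :=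
  {l | l.length = n + 1 ∧ StepsIn S l ∧
    (∀ k, 1 ≤ k → k < l.length → ¬ OnH (vert l k)) ∧ l.sum = e}

lemma preSet_split (S : Finset Pt) (n : ℕ) (e : Pt) :
    preSet S n e = slitSet S (n + 1) e ∪ bridgeSet S (n + 1) e := by
  ext l
  constructor
  · rintro ⟨hlen, hst, hav, hsum⟩
    by_cases hH : OnH e
    · exact Or.inr ⟨hlen, by rintro rfl; simp at hlen, hst, hav, hsum ▸ hH, hsum⟩
    · refine Or.inl ⟨hlen, hst, fun k hk1 hk2 => ?_, hsum⟩
      rcases lt_or_eq_of_le hk2 with h | h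
      · exact hav k hk1 h
      · rw [h, vert_length, hsum]; exact hH
  · rintro (⟨hlen, hst, hav, hsum⟩ | ⟨hlen, hne, hst, hav, hH, hsum⟩)
    · exact ⟨hlen, hst, fun k hk1 hk2 => hav k hk1 (le_of_lt hk2), hsum⟩
    · exact ⟨hlen, hst, hav, hsum⟩

lemma slit_bridge_disjoint (S : Finset Pt) (n : ℕ) (e : Pt) :
    Disjoint (slitSet S (n + 1) e) (bridgeSet S (n + 1) e) := by
  rw [Set.disjoint_left]
  rintro l ⟨hlen, hst, hav, hsum⟩ ⟨-, -, -, -, hH, hsum'⟩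
  exact hav l.length (by omega) le_rfl ((vert_length l).symm ▸ (hsum.symm ▸ hH))

lemma preSet_eq_biUnion (S : Finset Pt) (n : ℕ) (e : Pt) :
    preSet S n e = ⋃ s ∈ S, (fun l => l ++ [s]) '' slitSet S n (e - s) := by
  ext l
  simp only [Set.mem_iUnion, Set.mem_image, exists_prop]
  constructor
  · rintro ⟨hlen, hst, hav, hsum⟩
    have hne : l ≠ [] := by rintro rfl; simp at hlen
    set s := l.getLast hne with hs
    have hdl : l.dropLast ++ [s] = l := List.dropLast_append_getLast hne
    have hlen' : l.dropLast.length = n := by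
      have : l.dropLast.length = l.length - 1 := List.length_dropLast; omega
    refine ⟨s, hst s (List.getLast_mem hne), l.dropLast, ⟨hlen', ?_, ?_, ?_⟩, hdl⟩
    · exact fun x hx => hst x (List.mem_of_mem_dropLast hx)
    · intro k hk1 hk2
      rw [hlen'] at hk2
      have : vert l.dropLast k = vert l k := by
        conv_rhs => rw [← hdl]
        rw [vert_append_left _ _ (by omega)]
      rw [this]
      exact hav k hk1 (by omega)
    · have : l.dropLast.sum + s = e := by
        rw [← hsum]; conv_rhs => rw [← hdl]
        simp
      exact eq_sub_of_add_eq this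
  · rintro ⟨s, hsS, m, ⟨hlen, hst, hav, hsum⟩, rfl⟩
    refine ⟨by simp [hlen], ?_, ?_, ?_⟩
    · intro x hx
      rcases List.mem_append.mp hx with h | h
      · exact hst x h
      · simpa [List.mem_singleton.mp h] using hsS
    · intro k hk1 hk2
      simp only [List.length_append, List.length_singleton, hlen] at hk2
      rw [vert_append_left _ _ (by omega)]
      exact hav k hk1 (by omega)
    · rw [List.sum_append, List.sum_singleton, hsum]
      abel

lemma append_recurrence (S : Finset Pt) (n : ℕ) (e : Pt) :
    slitCount S (n + 1) e + (bridgeSet S (n + 1) e).ncard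
      = ∑ s ∈ S, slitCount S n (e - s) := by
  rw [slitCount_eq,
    ← Set.ncard_union_eq (slit_bridge_disjoint S n e) (slitSet_finite S _ e)
      (bridgeSet_finite S _ e),
    ← preSet_split, preSet_eq_biUnion,
    ncard_biUnion _ _
      (fun s hs => ((slitSet_finite S n (e - s)).image _))
      (fun a ha b hb hab => ?_)]
  · exact Finset.sum_congr rfl (fun s hs => by
      rw [Set.ncard_image_of_injective _ (List.append_left_injective [s]), slitCount_eq])
  · rw [Set.disjoint_left]
    rintro l ⟨x, -, rfl⟩ ⟨y, -, h⟩
    have h1 : (x ++ [a]).getLast? = some a := List.getLast?_concat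
    have h2 : (y ++ [b]).getLast? = some b := List.getLast?_concat
    simp only at h
    rw [h, h1] at h2
    exact hab (Option.some_injective _ h2)

def loopSet (S : Finset Pt) (n : ℕ) : Set (List Pt) :=
  {l | l.length = n ∧ StepsIn S l ∧
    (∀ i ≤ l.length, ¬ OnNegAxis (vert l i)) ∧ l.sum = (0, 0)}

lemma loopCount_eq (S : Finset Pt) (n : ℕ) : loopCount S n = (loopSet S n).ncard := rfl

lemma loopSet_finite (S : Finset Pt) (n : ℕ) : (loopSet S n).Finite :=
  (finite_walks S n).subset (fun l hl => ⟨hl.1, hl.2.1⟩)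

lemma not_negaxis_of_onH_ne (p : Pt) (hH : OnH p) (hne : ¬ OnNegAxis p) : p = (0, 0) := by
  obtain ⟨h2, h1⟩ := hH
  have : ¬ (p.2 = 0 ∧ p.1 < 0) := hne
  have hp1 : p.1 = 0 := by omega
  exact Prod.ext hp1 h2

lemma loop_decomp (S : Finset Pt) (n : ℕ) :
    loopSet S (n + 1) = ⋃ k ∈ Finset.Icc 1 (n + 1),
      (fun p : List Pt × List Pt => p.1 ++ p.2) ''
        (bridgeSet S k ((0 : ℤ), (0 : ℤ)) ×ˢ loopSet S (n + 1 - k)) := by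
  ext l
  simp only [Set.mem_iUnion, Set.mem_image, exists_prop, Finset.mem_Icc, Set.mem_prod]
  constructor
  · rintro ⟨hlen, hst, hav, hsum⟩
    have hP : ∃ j, 1 ≤ j ∧ vert l j = ((0 : ℤ), (0 : ℤ)) :=
      ⟨n + 1, by omega, by rw [← hlen, vert_length, hsum]⟩
    classical
    set k := Nat.find hP with hk
    obtain ⟨hk1, hkvert⟩ := Nat.find_spec hP
    have hkle : k ≤ n + 1 := Nat.find_min' hP ⟨by omega, by rw [← hlen, vert_length, hsum]⟩
    have hkmin : ∀ j, j < k → ¬ (1 ≤ j ∧ vert l j = ((0 : ℤ), (0 : ℤ))) :=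
      fun j hj => Nat.find_min hP hj
    have hbl : (l.take k).length = k := by rw [List.length_take]; omega
    have hbsum : (l.take k).sum = ((0 : ℤ), (0 : ℤ)) := by
      rw [← vert_length, hbl, vert_take l (le_refl k), hkvert]
    have hkvert0 : vert l k = (0 : Pt) := hkvert
    have h1 : l.take k ≠ [] := by
      intro h; rw [h] at hbl; simp at hbl; omega
    have h2 : StepsIn S (l.take k) := fun x hx => hst x (List.take_subset k l hx)
    have h3 : ∀ j, 1 ≤ j → j < (l.take k).length → ¬ OnH (vert (l.take k) j) := by
      intro j hj1 hj2
      rw [hbl] at hj2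
      rw [vert_take l (le_of_lt hj2)]
      intro hH
      have hnn : ¬ OnNegAxis (vert l j) := hav j (by omega)
      exact hkmin j hj2 ⟨hj1, not_negaxis_of_onH_ne _ hH hnn⟩
    have h4 : OnH (l.take k).sum := by rw [hbsum]; exact ⟨rfl, le_refl 0⟩
    have h5 : (l.drop k).length = n + 1 - k := by rw [List.length_drop, hlen]
    have h6 : StepsIn S (l.drop k) := fun x hx => hst x (List.drop_subset k l hx)
    have h7 : ∀ i ≤ (l.drop k).length, ¬ OnNegAxis (vert (l.drop k) i) := by
      intro i hi
      rw [h5] at hi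
      rw [vert_drop, hkvert0, sub_zero]
      exact hav (k + i) (by omega)
    have h8 : (l.drop k).sum = ((0 : ℤ), (0 : ℤ)) := by
      rw [← vert_length, h5, vert_drop, hkvert0, sub_zero]
      have : k + (n + 1 - k) = n + 1 := by omega
      rw [this, ← hlen, vert_length, hsum]
    exact ⟨k, ⟨hk1, hkle⟩, (l.take k, l.drop k), ⟨⟨hbl, h1, h2, h3, h4, hbsum⟩,
      h5, h6, h7, h8⟩, List.take_append_drop k l⟩
  · rintro ⟨k, ⟨hk1, hk2⟩, ⟨b, m⟩, ⟨⟨hbl, hbne, hbst, hbav, hbH, hbsum⟩,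
      ⟨hml, hmst, hmav, hmsum⟩⟩, rfl⟩
    dsimp only at hbl hbne hbst hbav hbH hbsum hml hmst hmav hmsum
    refine ⟨by rw [List.length_append, hbl, hml]; omega, ?_, ?_, ?_⟩
    · intro x hx
      rcases List.mem_append.mp hx with h | h
      exacts [hbst x h, hmst x h]
    · intro i hi
      rw [List.length_append, hbl, hml] at hi
      rcases le_or_gt i k with h | h
      · rw [vert_append_left b m (by omega)]
        rcases Nat.eq_zero_or_pos i with h0 | h0
        · subst h0; rw [vert_zero]; rintro ⟨-, h⟩; exact absurd h (by norm_num)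
        · rcases lt_or_eq_of_le h with h | h
          · intro hneg
            exact hbav i h0 (by omega) ⟨hneg.1, le_of_lt hneg.2⟩

          · subst h
            rw [← hbl, vert_length, hbsum]
            rintro ⟨-, hlt⟩; exact absurd hlt (by norm_num)
      · have hdrop : (b ++ m).drop k = m := by
          rw [← hbl]; exact List.drop_left
        have hvk : vert (b ++ m) k = (0 : Pt) := by
          rw [vert_append_left b m (by omega), ← hbl, vert_length]; exact hbsum
        have hik : k + (i - k) = i := by omega
        have h9 := vert_drop (b ++ m) k (i - k)
        rw [hdrop, hik, hvk, sub_zero] at h9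
        rw [← h9]
        exact hmav (i - k) (by omega)
    · rw [List.sum_append, hbsum, hmsum]; simp

lemma loop_recurrence (S : Finset Pt) (n : ℕ) :
    loopCount S (n + 1)
      = ∑ k ∈ Finset.Icc 1 (n + 1), bridgeCount S k 0 * loopCount S (n + 1 - k) := by
  have hb : ∀ k, bridgeCount S k 0 = (bridgeSet S k ((0 : ℤ), (0 : ℤ))).ncard := fun k => rfl
  rw [loopCount_eq, loop_decomp,
    ncard_biUnion _ _
      (fun k hk => ((bridgeSet_finite S k _).prod (loopSet_finite S _)).image _)
      (fun a ha b hb' hab => ?_)]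
  · refine Finset.sum_congr rfl (fun k hk => ?_)
    rw [Set.ncard_image_of_injOn, ncard_prod, hb, loopCount_eq]
    rintro ⟨b1, m1⟩ ⟨hb1, -⟩ ⟨b2, m2⟩ ⟨hb2, -⟩ heq
    dsimp only at heq hb1 hb2
    have hlen : b1.length = b2.length := by rw [hb1.1, hb2.1]
    obtain ⟨h1, h2⟩ := List.append_inj heq hlen
    simp [h1, h2]
  · -- disjointness across k
    have key : ∀ u v : ℕ, u ∈ Finset.Icc 1 (n + 1) → v ∈ Finset.Icc 1 (n + 1) → u < v →
        Disjoint ((fun p : List Pt × List Pt => p.1 ++ p.2) ''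
            (bridgeSet S u ((0 : ℤ), (0 : ℤ)) ×ˢ loopSet S (n + 1 - u)))
          ((fun p : List Pt × List Pt => p.1 ++ p.2) ''
            (bridgeSet S v ((0 : ℤ), (0 : ℤ)) ×ˢ loopSet S (n + 1 - v))) := by
      intro u v hu hv huv
      obtain ⟨hu1, hu2⟩ := Finset.mem_Icc.mp hu
      rw [Set.disjoint_left]
      rintro l ⟨⟨b1, m1⟩, ⟨hb1, -⟩, rfl⟩ ⟨⟨b2, m2⟩, ⟨hb2, -⟩, heq⟩
      dsimp only at heq hb1 hb2
      obtain ⟨hl1, -, -, -, -, hs1⟩ := hb1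
      obtain ⟨hl2, -, -, hav2, -, -⟩ := hb2
      have hva : vert (b1 ++ m1) u = ((0 : ℤ), (0 : ℤ)) := by
        rw [vert_append_left b1 m1 (by omega), ← hl1, vert_length]
        exact hs1
      have hva' : ¬ OnH (vert (b1 ++ m1) u) := by
        rw [← heq, vert_append_left b2 m2 (by omega)]
        exact hav2 u hu1 (by omega)
      exact hva' (by rw [hva]; exact ⟨rfl, le_refl 0⟩)
    rcases lt_or_gt_of_ne hab with h | h
    · exact key a b ha hb' h
    · exact (key b a hb' ha h).symm

lemma slitCount_zero (S : Finset Pt) (e : Pt) :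
    slitCount S 0 e = if e = 0 then 1 else 0 := by
  rw [slitCount]
  by_cases h : e = 0
  · subst h
    rw [if_pos rfl]
    convert Set.ncard_singleton ([] : List Pt)
    ext l
    simp only [Set.mem_setOf_eq, Set.mem_singleton_iff]
    constructor
    · rintro ⟨hl, -⟩; exact List.length_eq_zero_iff.mp hl
    · rintro rfl
      exact ⟨rfl, fun x hx => absurd hx List.not_mem_nil,
        fun i hi1 hi2 => by simp at hi1 hi2; omega, rfl⟩
  · rw [if_neg h]
    convert Set.ncard_empty (List Pt)
    ext l
    simp only [Set.mem_setOf_eq, Set.mem_empty_iff_false, iff_false]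
    rintro ⟨hl, -, -, hsum⟩
    rw [List.length_eq_zero_iff.mp hl] at hsum
    exact h hsum.symm

lemma bridgeCount_zero (S : Finset Pt) (i : ℤ) : bridgeCount S 0 i = 0 := by
  rw [bridgeCount]
  convert Set.ncard_empty (List Pt)
  ext l
  simp only [Set.mem_setOf_eq, Set.mem_empty_iff_false, iff_false]
  rintro ⟨hl, hne, -⟩
  exact hne (List.length_eq_zero_iff.mp hl)

lemma loopCount_zero (S : Finset Pt) : loopCount S 0 = 1 := by
  rw [loopCount]
  convert Set.ncard_singleton ([] : List Pt)
  ext l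
  simp only [Set.mem_setOf_eq, Set.mem_singleton_iff]
  constructor
  · rintro ⟨hl, -⟩; exact List.length_eq_zero_iff.mp hl
  · rintro rfl
    refine ⟨rfl, fun x hx => absurd hx List.not_mem_nil, ?_, rfl⟩
    intro i hi
    simp only [List.length_nil, Nat.le_zero] at hi
    subst hi
    rintro ⟨-, h⟩
    exact absurd h (by norm_num [vert_zero])

lemma bridgeSet_ncard_eq (S : Finset Pt) (n : ℕ) (e : Pt) :
    (bridgeSet S n e).ncard = if e.2 = 0 then bridgeCount S n e.1 else 0 := by
  by_cases h : e.2 = 0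
  · rw [if_pos h]
    have he : e = (e.1, (0 : ℤ)) := Prod.ext rfl h
    rw [he]
    rfl
  · rw [if_neg h]
    convert Set.ncard_empty (List Pt)
    ext l
    simp only [bridgeSet, Set.mem_setOf_eq, Set.mem_empty_iff_false, iff_false]
    rintro ⟨-, -, -, -, hH, hsum⟩
    exact h (hsum ▸ hH.1)

lemma inl_injective : Function.Injective (fun i : ℤ => ((i, 0) : Pt)) :=
  fun a b h => by simpa using congrArg Prod.fst h

lemma iotaX_apply (g : L1) (e : Pt) :
    (iotaX g).coeff e = if e.2 = 0 then g.coeff e.1 else 0 := by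
  have hg : (iotaX g).coeff = Finsupp.mapDomain (fun i : ℤ => ((i, 0) : Pt)) g.coeff := by
    rw [iotaX, AddMonoidAlgebra.mapDomainRingHom]
    rfl
  rw [hg]
  by_cases h : e.2 = 0
  · rw [if_pos h]
    have he : e = (fun i : ℤ => ((i, 0) : Pt)) e.1 := Prod.ext rfl h
    conv_lhs => rw [he]
    rw [Finsupp.mapDomain_apply inl_injective]
  · rw [if_neg h, Finsupp.mapDomain_notin_range]
    rintro ⟨i, rfl⟩
    exact h rfl


/-- `K(x,y;t) S(x,y;t) = 1 - Ω(x⁻¹;t)` where `Ω` is the generating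
function of bridges, `Ω(x⁻¹;0) = 0`, and `L(t)(1 - Ω₀(t)) = 1` where `Ω₀` counts
bridges ending at the origin and `L` counts loops. -/
theorem statement11 (S : Finset Pt)
    (Sgf : PowerSeries L2) (Omega : PowerSeries L1) (Omega0 L : PowerSeries ℚ)
    (hS : ∀ (n : ℕ) (e : Pt),
      (PowerSeries.coeff n Sgf).coeff e = (slitCount S n e : ℚ))
    (hOmega : ∀ (n : ℕ) (i : ℤ),
      (PowerSeries.coeff n Omega).coeff i = (bridgeCount S n i : ℚ))
    (hOmega0 : ∀ n : ℕ, PowerSeries.coeff n Omega0 = (bridgeCount S n 0 : ℚ))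
    (hL : ∀ n : ℕ, PowerSeries.coeff n L = (loopCount S n : ℚ)) :
    PowerSeries.coeff 0 Omega = 0 ∧
    Kpoly S * Sgf = 1 - PowerSeries.map iotaX Omega ∧
    L * (1 - Omega0) = 1 := by
  have part1 : PowerSeries.coeff 0 Omega = 0 := by
    ext i
    rw [hOmega 0 i, bridgeCount_zero]
    simp
  refine ⟨part1, ?_, ?_⟩
  · set σ : L2 := ∑ s ∈ S, AddMonoidAlgebra.single s (1 : ℚ) with hσ
    have hprod : Kpoly S * Sgf = Sgf - PowerSeries.X * (PowerSeries.C σ * Sgf) := by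
      rw [Kpoly]; ring
    ext n : 1
    rw [hprod, map_sub, map_sub, PowerSeries.coeff_map]
    cases n with
    | zero =>
      rw [PowerSeries.coeff_zero_X_mul, part1, map_zero, sub_zero, sub_zero]
      ext e
      rw [hS 0 e, slitCount_zero]
      rw [PowerSeries.coeff_zero_eq_constantCoeff, map_one]
      simp [AddMonoidAlgebra.one_def, Finsupp.single_apply, eq_comm]
    | succ n =>
      rw [PowerSeries.coeff_succ_X_mul, PowerSeries.coeff_C_mul]
      have h1 : PowerSeries.coeff (n + 1) (1 : PowerSeries L2) = 0 := by
        rw [PowerSeries.coeff_one]; simp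
      rw [h1, zero_sub]
      ext e
      rw [AddMonoidAlgebra.coeff_sub, AddMonoidAlgebra.coeff_neg, Finsupp.sub_apply, Finsupp.neg_apply, iotaX_apply, hS]
      have hmul : (σ * PowerSeries.coeff n Sgf).coeff e
          = ∑ s ∈ S, ((slitCount S n (e - s) : ℚ)) := by
        rw [hσ, Finset.sum_mul, AddMonoidAlgebra.coeff_sum, Finsupp.finset_sum_apply]
        refine Finset.sum_congr rfl (fun s hs => ?_)
        rw [AddMonoidAlgebra.coeff_single_mul_apply, one_mul, neg_add_eq_sub, hS]
      rw [hmul, hOmega]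
      have hrec := append_recurrence S n e
      rw [bridgeSet_ncard_eq] at hrec
      by_cases h2 : e.2 = 0
      · rw [if_pos h2] at hrec ⊢
        have := congrArg (Nat.cast : ℕ → ℚ) hrec
        push_cast at this
        linarith
      · rw [if_neg h2] at hrec ⊢
        have := congrArg (Nat.cast : ℕ → ℚ) hrec
        push_cast at this
        linarith
  · have hO0 : PowerSeries.coeff 0 Omega0 = 0 := by
      rw [hOmega0, bridgeCount_zero]; simp
    ext n : 1
    rw [mul_sub, mul_one, map_sub, PowerSeries.coeff_mul]
    cases n with
    | zero =>
      rw [Finset.Nat.antidiagonal_zero, Finset.sum_singleton, hO0, mul_zero, sub_zero,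
        hL 0, loopCount_zero, PowerSeries.coeff_zero_eq_constantCoeff, map_one]
      norm_num
    | succ n =>
      rw [Finset.Nat.sum_antidiagonal_eq_sum_range_succ_mk, Finset.sum_range_succ,
        Nat.sub_self, hO0, mul_zero, add_zero]
      have hnat : ∑ k ∈ Finset.range (n + 1), loopCount S k * bridgeCount S (n + 1 - k) 0
          = loopCount S (n + 1) := by
        rw [loop_recurrence]
        refine Finset.sum_nbij' (i := fun k => n + 1 - k) (j := fun j => n + 1 - j)
          ?_ ?_ ?_ ?_ ?_
        · intro a ha
          simp only [Finset.mem_range] at ha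
          simp only [Finset.mem_Icc]
          omega
        · intro b hb
          simp only [Finset.mem_Icc] at hb
          simp only [Finset.mem_range]
          omega
        · intro a ha; simp only [Finset.mem_range] at ha; omega
        · intro b hb; simp only [Finset.mem_Icc] at hb; omega
        · intro a ha
          simp only [Finset.mem_range] at ha
          have : n + 1 - (n + 1 - a) = a := by omega
          rw [this, mul_comm]
      have hsum : ∑ k ∈ Finset.range (n + 1),
          PowerSeries.coeff k L * PowerSeries.coeff (n + 1 - k) Omega0
          = (loopCount S (n + 1) : ℚ) := by
        rw [← hnat]
        push_cast
        exact Finset.sum_congr rfl (fun k hk => by rw [hL, hOmega0])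
      rw [hsum, hL, PowerSeries.coeff_one, if_neg (Nat.succ_ne_zero n)]
      ring


end SlitPlane
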